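/- arXiv:math/0402329 — 2 statements merged into one kernel-verified Lean document; each statement's English description precedes it below -/
import Mathlib

section
/- For the degree-(2d+1) smooth hypersurface V^{2n}(2d+1) ⊂ CP^{2n+1}, the Â-genus equals 2^{-2n}(2d+1)/(2n+1)! · ∏_{k=1}^{n} ((2d+1)² - (2k)²), and for all d ≥ n ≥ 1 this rational number is nonzero and not an integer. -/
open Finset

/-- The Â-genus of the degree-`2d+1` smooth hypersurface `V^{2n}(2d+1) ⊂ ℂP^{2n+1}`:
`2^{-2n}(2d+1)/(2n+1)! ⬝ ∏_{k=1}^n ((2d+1)² - (2k)²)`. -/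
def AhatHypersurface (n d : ℕ) : ℚ :=
  (2 * (d : ℚ) + 1) * (∏ k ∈ Finset.Icc 1 n, ((2 * (d : ℚ) + 1) ^ 2 - (2 * (k : ℚ)) ^ 2)) /
    (2 ^ (2 * n) * (Nat.factorial (2 * n + 1) : ℚ))

/-- For all `d ≥ n ≥ 1` the Â-genus of `V^{2n}(2d+1)` is a nonzero rational number
which is not an integer. -/
theorem ahatHypersurface_ne_zero_and_not_integer (n d : ℕ) (hn : 1 ≤ n) (hd : n ≤ d) :
    AhatHypersurface n d ≠ 0 ∧ ¬∃ m : ℤ, AhatHypersurface n d = (m : ℚ) := by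
  set N : ℤ := (2 * (d : ℤ) + 1) *
      ∏ k ∈ Finset.Icc 1 n, ((2 * (d : ℤ) + 1) ^ 2 - (2 * (k : ℤ)) ^ 2) with hN
  set D : ℤ := 2 ^ (2 * n) * (Nat.factorial (2 * n + 1) : ℤ) with hD
  have hcast : AhatHypersurface n d = (N : ℚ) / (D : ℚ) := by
    rw [AhatHypersurface, hN, hD]
    push_cast
    ring
  have hNpos : 0 < N := by
    apply mul_pos (by positivity)
    apply Finset.prod_pos
    intro k hk
    have hk' : k ≤ n := (Finset.mem_Icc.mp hk).2
    have hkd : (k : ℤ) ≤ (d : ℤ) := by exact_mod_cast hk'.trans hd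
    nlinarith [hkd, sq_nonneg ((k : ℤ))]
  have hDpos : 0 < D := by
    have := Nat.factorial_pos (2 * n + 1)
    positivity
  have hq : AhatHypersurface n d ≠ 0 := by
    rw [hcast]
    have : (0:ℚ) < (N : ℚ) / (D : ℚ) := by
      apply div_pos <;> exact_mod_cast ‹_›
    linarith
  refine ⟨hq, ?_⟩
  rintro ⟨m, hm⟩
  have hmD : N = m * D := by
    have hD0 : (D : ℚ) ≠ 0 := by exact_mod_cast hDpos.ne'
    rw [hcast, div_eq_iff hD0] at hm
    exact_mod_cast hm
  -- reduce mod 2 : N is odd, D is even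
  have hNodd : Odd N := by
    rw [hN]
    refine Odd.mul ⟨d, by ring⟩ ?_
    refine Finset.prod_induction _ Odd (fun a b ha hb => ha.mul hb) odd_one ?_
    intro k hk
    exact ⟨2 * (d : ℤ) * ((d:ℤ)+1) - 2 * k ^ 2, by ring⟩
  have hDeven : Even D := by
    rw [hD]
    refine Even.mul_right ?_ _
    exact even_two.pow_of_ne_zero (by omega)
  rw [hmD] at hNodd
  exact (Int.not_odd_iff_even.mpr (hDeven.mul_left m)) hNodd
end

section
/- Let δ be a linear map on an algebra satisfying δ(ab) = δ(a)b + aδ(b) (a derivation), and let τ be a trace functional with τ(δ(a)) = 0 for all a and τ([a,b]) = 0. If a_t is a smooth family of invertible elements, then d/dt τ(a_t^{-1} δ(a_t)) = 0. -/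
/-- Abstract homotopy-invariance computation: let `𝒜` be a normed algebra over `ℂ`,
`δ` a continuous derivation on `𝒜`, and `τ` a continuous trace functional with
`τ ∘ δ = 0` and `τ` vanishing on commutators.  If `a t` is a differentiable family of
invertible elements with differentiable inverse `b t`, then
`d/dt τ(a_t⁻¹ δ(a_t)) = 0`. -/
theorem deriv_trace_inv_mul_derivation
    (𝒜 : Type*) [NormedRing 𝒜] [NormedAlgebra ℂ 𝒜]
    (δ : 𝒜 →L[ℂ] 𝒜) (hder : ∀ x y : 𝒜, δ (x * y) = δ x * y + x * δ y)
    (τ : 𝒜 →L[ℂ] ℂ) (hτδ : ∀ x : 𝒜, τ (δ x) = 0)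
    (hτcomm : ∀ x y : 𝒜, τ (x * y) = τ (y * x))
    (a b : ℝ → 𝒜)
    (ha : Differentiable ℝ a) (hb : Differentiable ℝ b)
    (hab : ∀ t, a t * b t = 1) (hba : ∀ t, b t * a t = 1) :
    ∀ t : ℝ, deriv (fun s => τ (b s * δ (a s))) t = 0 := by
  intro t
  set A := deriv a t with hA
  set B := deriv b t with hB
  have haA : HasDerivAt a A t := (ha t).hasDerivAt
  have hbB : HasDerivAt b B t := (hb t).hasDerivAt
  -- δ 1 = 0
  have hδ1 : δ (1 : 𝒜) = 0 := by
    have h : δ (1 : 𝒜) = δ 1 + δ 1 := by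
      have := hder 1 1; simpa using this
    exact (left_eq_add.mp h)
  -- derivative of a * b = 1 gives a t * B = -(A * b t)
  have hconst : HasDerivAt (fun s => a s * b s) (A * b t + a t * B) t := haA.mul hbB
  have hconst' : HasDerivAt (fun s => a s * b s) 0 t := by
    have he : (fun s => a s * b s) = fun _ => (1 : 𝒜) := funext hab
    rw [he]; exact hasDerivAt_const t 1
  have hsum : A * b t + a t * B = 0 := hconst.unique hconst'
  have haB : a t * B = -(A * b t) := eq_neg_of_add_eq_zero_left (by rw [add_comm] at hsum; exact hsum)
  have hBval : B = -(b t * A * b t) := by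
    calc B = b t * a t * B := by rw [hba, one_mul]
    _ = b t * (a t * B) := by rw [mul_assoc]
    _ = b t * -(A * b t) := by rw [haB]
    _ = -(b t * A * b t) := by rw [mul_neg, ← mul_assoc]
  -- δ b = -(b δa b)
  have hδba : δ (b t) * a t + b t * δ (a t) = 0 := by
    have := hder (b t) (a t); rw [hba t, hδ1] at this; exact this.symm
  have hδb : δ (b t) = -(b t * δ (a t) * b t) := by
    have h1 : δ (b t) * a t = -(b t * δ (a t)) := eq_neg_of_add_eq_zero_left hδba
    calc δ (b t) = δ (b t) * (a t * b t) := by rw [hab, mul_one]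
    _ = δ (b t) * a t * b t := by rw [mul_assoc]
    _ = -(b t * δ (a t)) * b t := by rw [h1]
    _ = -(b t * δ (a t) * b t) := by rw [neg_mul]
  -- the derivative of the whole expression
  have hda : HasDerivAt (fun s => δ (a s)) (δ A) t :=
    ((δ.restrictScalars ℝ).hasFDerivAt (x := a t)).comp_hasDerivAt t haA
  have hmul : HasDerivAt (fun s => b s * δ (a s)) (B * δ (a t) + b t * δ A) t :=
    hbB.mul hda
  have hτd : HasDerivAt (fun s => τ (b s * δ (a s))) (τ (B * δ (a t) + b t * δ A)) t :=
    by
      have h := ((τ.restrictScalars ℝ).hasFDerivAt (x := b t * δ (a t))).comp_hasDerivAt t hmul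
      exact h
  rw [hτd.deriv]
  -- key algebraic identity
  have h2 : τ (b t * δ A) = τ (b t * A * (b t * δ (a t))) := by
    have e2 : τ (δ A * b t) + τ (A * δ (b t)) = 0 := by
      have := hτδ (A * b t)
      rw [hder, map_add] at this; exact this
    have e3 : τ (δ A * b t) = -τ (A * δ (b t)) := eq_neg_of_add_eq_zero_left e2
    calc τ (b t * δ A) = τ (δ A * b t) := hτcomm _ _
    _ = -τ (A * δ (b t)) := e3
    _ = -τ (A * -(b t * δ (a t) * b t)) := by rw [hδb]
    _ = τ (A * (b t * δ (a t) * b t)) := by rw [mul_neg, map_neg, neg_neg]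
    _ = τ ((b t * δ (a t) * b t) * A) := hτcomm _ _
    _ = τ ((b t * δ (a t)) * (b t * A)) := by rw [mul_assoc, mul_assoc]
    _ = τ ((b t * A) * (b t * δ (a t))) := hτcomm _ _
    _ = τ (b t * A * (b t * δ (a t))) := rfl
  have h1 : τ (B * δ (a t)) = -τ (b t * A * (b t * δ (a t))) := by
    rw [hBval]
    have : (-(b t * A * b t)) * δ (a t) = -(b t * A * (b t * δ (a t))) := by
      noncomm_ring
    rw [this, map_neg]
  rw [map_add, h1, h2, neg_add_cancel]
end
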